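/- Let Γ be the Petersen graph realized as the Kneser graph KG_{5,2} with vertex set V(Γ) enumerated as v_1,…,v_{10}, edge set E(Γ), and adjacency matrix A_Γ (so A_Γ(u,w) = 1 if u ∼ w and 0 otherwise). Let W = ℂ^{V(Γ)} with basis (e_v)_{v∈V(Γ)}. Define the rank-10 tensor S̃ ∈ W^{⊗10} by S̃ = Σ_{(i_1,…,i_{10}) ∈ V(Γ)^{10}} (Π_{(j,k): {v_j,v_k} ∈ E(Γ)} A_Γ(i_j, i_k)) · e_{i_1}⊗⋯⊗e_{i_{10}}. Then S̃ = Σ_{g ∈ S_5} e_{g·v_1}⊗e_{g·v_2}⊗⋯⊗e_{g·v_{10}}; i.e., the tensor built from the Petersen graph by placing GHZ tensors at vertices and the adjacency tensor on edges equals the molecule S of the group-action model. -/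

import Mathlib

noncomputable section

/-- Vertices of the Kneser graph `KG_{5,2}`: the 2-element subsets of `{1,…,5}`. -/
abbrev KVertex : Type := {s : Finset (Fin 5) // s.card = 2}

/-- The Petersen graph, realized as the Kneser graph `KG_{5,2}`:
two 2-element subsets are adjacent iff they are disjoint. -/
def petersen : SimpleGraph KVertex where
  Adj u v := Disjoint u.1 v.1
  symm := ⟨fun _ _ h => h.symm⟩
  loopless := ⟨by
    intro v h
    have hv := v.2
    rw [disjoint_self.mp h] at hv
    simp at hv⟩

instance : DecidableRel petersen.Adj :=
  fun u v => inferInstanceAs (Decidable (Disjoint u.1 v.1))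

/-- The action of `S_5` on the vertices: `g • {a,b} = {g a, g b}`. -/
instance : SMul (Equiv.Perm (Fin 5)) KVertex :=
  ⟨fun g v => ⟨v.1.image g, by rw [Finset.card_image_of_injective _ g.injective]; exact v.2⟩⟩

instance : MulAction (Equiv.Perm (Fin 5)) KVertex where
  one_smul v := by
    apply Subtype.ext
    show v.1.image ⇑(1 : Equiv.Perm (Fin 5)) = v.1
    simp
  mul_smul g h v := by
    apply Subtype.ext
    show v.1.image ⇑(g * h) = (v.1.image ⇑h).image ⇑g
    rw [Finset.image_image]
    rfl

/-- `W^{⊗n}` for `W = ℂ^{V(Γ)}`, realized via multi-index coordinates. -/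
abbrev TensK (n : ℕ) := (Fin n → KVertex) → ℂ

/-- The adjacency matrix of the Petersen graph: `A_Γ(u,w) = 1` if `u ∼ w`, else `0`. -/
def adjMat (u w : KVertex) : ℂ := if petersen.Adj u w then 1 else 0

/-- Given an enumeration `v : Fin 10 ≃ V(Γ)` of the vertices, the rank-10 tensor
`S̃ = Σ_{(i_1,…,i_{10})} (Π_{(j,k) : {v_j,v_k} ∈ E(Γ)} A_Γ(i_j,i_k)) e_{i_1}⊗⋯⊗e_{i_{10}}`
built from the Petersen graph by placing GHZ tensors at vertices and the adjacency
tensor on edges (each edge `{v_j, v_k}` counted once, via `j < k`). -/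
def Stilde (v : Fin 10 ≃ KVertex) : TensK 10 :=
  fun i => ∏ j : Fin 10, ∏ k : Fin 10,
    if j < k ∧ petersen.Adj (v j) (v k) then adjMat (i j) (i k) else 1

/-- The molecule `S = Σ_{g ∈ S_5} e_{g•v_1} ⊗ e_{g•v_2} ⊗ ⋯ ⊗ e_{g•v_{10}}`. -/
def moleculeK (v : Fin 10 ≃ KVertex) : TensK 10 :=
  ∑ g : Equiv.Perm (Fin 5), fun i => if i = (fun t => g • v t) then 1 else 0

/-- For any enumeration `v_1, …, v_{10}` of the vertices of the
Petersen graph, the tensor `S̃` built from the Petersen graph (GHZ tensors at vertices,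
adjacency tensor on edges) equals the molecule `S` of the group-action model:
`S̃ = Σ_{g ∈ S_5} e_{g•v_1} ⊗ ⋯ ⊗ e_{g•v_{10}}`. -/
def starK (x : Fin 5) : Finset KVertex := Finset.univ.filter (fun p => x ∈ p.1)

set_option maxHeartbeats 4000000 in
lemma cardStar : ∀ e : Fin 5, (starK e).card = 4 := by decide

set_option maxHeartbeats 8000000 in
lemma starUnion : ∀ x y : Fin 5, x ≠ y → ((starK x) ∪ (starK y)).card = 7 := by decide

set_option synthInstance.maxSize 2000 in
set_option synthInstance.maxHeartbeats 1000000 in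
set_option maxHeartbeats 16000000 in
lemma fact4 : ∀ p q r s : KVertex, (p ≠ q ∧ p ≠ r ∧ p ≠ s ∧ q ≠ r ∧ q ≠ s ∧ r ≠ s) →
    (¬petersen.Adj p q ∧ ¬petersen.Adj p r ∧ ¬petersen.Adj p s ∧ ¬petersen.Adj q r ∧
    ¬petersen.Adj q s ∧ ¬petersen.Adj r s) →
    ∃ e : Fin 5, e ∈ p.1 ∧ e ∈ q.1 ∧ e ∈ r.1 ∧ e ∈ s.1 := by decide

set_option synthInstance.maxSize 2000 in
set_option synthInstance.maxHeartbeats 1000000 in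
set_option maxHeartbeats 16000000 in
lemma starEnum : ∀ x : Fin 5, ∃ p q r s : KVertex,
    (p ≠ q ∧ p ≠ r ∧ p ≠ s ∧ q ≠ r ∧ q ≠ s ∧ r ≠ s) ∧
    (∀ w : KVertex, x ∈ w.1 ↔ (w = p ∨ w = q ∨ w = r ∨ w = s)) := by decide

lemma existsDistinct : ∀ x : Fin 5, ∃ y z : Fin 5, x ≠ y ∧ x ≠ z ∧ y ≠ z := by decide
set_option maxHeartbeats 2000000 in
lemma fact2 : ∀ x p q : KVertex, petersen.Adj x p → petersen.Adj x q → ¬ petersen.Adj p q := by decide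
set_option maxHeartbeats 4000000 in
lemma fact1 : ∀ a b : KVertex, a ≠ b → ¬ petersen.Adj a b →
    ∃ c d : KVertex, petersen.Adj a c ∧ petersen.Adj b d ∧ petersen.Adj c d := by decide


lemma smul_val (g : Equiv.Perm (Fin 5)) (a : KVertex) : (g • a).1 = a.1.image ⇑g := rfl

lemma adj_smul (g : Equiv.Perm (Fin 5)) {a b : KVertex} (h : petersen.Adj a b) :
    petersen.Adj (g • a) (g • b) := by
  show Disjoint (a.1.image ⇑g) (b.1.image ⇑g)
  rw [Finset.disjoint_image g.injective]
  exact h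

lemma share_not_adj {x : Fin 5} {a b : KVertex} (ha : x ∈ a.1) (hb : x ∈ b.1) :
    ¬ petersen.Adj a b := fun h => Finset.disjoint_left.mp h ha hb

lemma faithful {g₁ g₂ : Equiv.Perm (Fin 5)} (H : ∀ a : KVertex, g₁ • a = g₂ • a) : g₁ = g₂ := by
  have key : ∀ x y : Fin 5, x ≠ y → g₁ x = g₂ x ∨ g₁ x = g₂ y := by
    intro x y hxy
    have h0 := congrArg Subtype.val (H ⟨{x, y}, Finset.card_pair hxy⟩)
    rw [smul_val, smul_val] at h0
    simp only [Finset.image_insert, Finset.image_singleton] at h0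
    have hm : g₁ x ∈ ({g₂ x, g₂ y} : Finset (Fin 5)) := by
      rw [← h0]; simp
    simpa using hm
  apply Equiv.ext
  intro x
  obtain ⟨y, z, hxy, hxz, hyz⟩ := existsDistinct x
  rcases key x y hxy with h1 | h1
  · exact h1
  · rcases key x z hxz with h2 | h2
    · exact h2
    · exact absurd (g₂.injective (h1.symm.trans h2)) hyz

lemma hom_exists (f : KVertex → KVertex)
    (hf : ∀ a b, petersen.Adj a b → petersen.Adj (f a) (f b)) :
    ∃ g : Equiv.Perm (Fin 5), ∀ a, f a = g • a := by
  have hinj : Function.Injective f := by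
    intro a b hab
    by_contra hne
    by_cases hadj : petersen.Adj a b
    · have := hf a b hadj
      rw [hab] at this
      exact petersen.loopless.irrefl _ this
    · obtain ⟨c, d, hac, hbd, hcd⟩ := fact1 a b hne hadj
      have h2 : petersen.Adj (f a) (f d) := by rw [hab]; exact hf b d hbd
      exact fact2 (f a) (f c) (f d) (hf a c hac) h2 (hf c d hcd)
  have hrefl : ∀ a b, petersen.Adj (f a) (f b) → petersen.Adj a b := by
    have hFinj : Function.Injective (fun p : {p : KVertex × KVertex // petersen.Adj p.1 p.2} =>
        (⟨(f p.1.1, f p.1.2), hf _ _ p.2⟩ : {p : KVertex × KVertex // petersen.Adj p.1 p.2})) := by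
      intro p q h
      have h1 := congrArg (fun t : {p : KVertex × KVertex // petersen.Adj p.1 p.2} => t.1.1) h
      have h2 := congrArg (fun t : {p : KVertex × KVertex // petersen.Adj p.1 p.2} => t.1.2) h
      exact Subtype.ext (Prod.ext (hinj h1) (hinj h2))
    have hFsurj := Finite.injective_iff_surjective.mp hFinj
    intro a b hab
    obtain ⟨⟨⟨c, d⟩, hcd⟩, hp⟩ := hFsurj ⟨(f a, f b), hab⟩
    have h1 : f c = f a := congrArg (fun t : {p : KVertex × KVertex // petersen.Adj p.1 p.2} => t.1.1) hp
    have h2 : f d = f b := congrArg (fun t : {p : KVertex × KVertex // petersen.Adj p.1 p.2} => t.1.2) hp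
    rw [← hinj h1, ← hinj h2]
    exact hcd
  have hstep : ∀ x : Fin 5, ∃ e : Fin 5, ∀ a : KVertex, x ∈ a.1 → e ∈ (f a).1 := by
    intro x
    obtain ⟨p, q, r, s, ⟨d1, d2, d3, d4, d5, d6⟩, hmem⟩ := starEnum x
    have hxp : x ∈ p.1 := (hmem p).mpr (Or.inl rfl)
    have hxq : x ∈ q.1 := (hmem q).mpr (Or.inr (Or.inl rfl))
    have hxr : x ∈ r.1 := (hmem r).mpr (Or.inr (Or.inr (Or.inl rfl)))
    have hxs : x ∈ s.1 := (hmem s).mpr (Or.inr (Or.inr (Or.inr rfl)))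
    obtain ⟨e, he⟩ := fact4 (f p) (f q) (f r) (f s)
      ⟨fun h => d1 (hinj h), fun h => d2 (hinj h), fun h => d3 (hinj h),
       fun h => d4 (hinj h), fun h => d5 (hinj h), fun h => d6 (hinj h)⟩
      ⟨fun h => share_not_adj hxp hxq (hrefl _ _ h), fun h => share_not_adj hxp hxr (hrefl _ _ h),
       fun h => share_not_adj hxp hxs (hrefl _ _ h), fun h => share_not_adj hxq hxr (hrefl _ _ h),
       fun h => share_not_adj hxq hxs (hrefl _ _ h), fun h => share_not_adj hxr hxs (hrefl _ _ h)⟩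
    refine ⟨e, fun a hxa => ?_⟩
    rcases (hmem a).mp hxa with h | h | h | h <;> subst h
    · exact he.1
    · exact he.2.1
    · exact he.2.2.1
    · exact he.2.2.2
  choose g hg using hstep
  have ginj : Function.Injective g := by
    intro x y hxy
    by_contra hne
    have hsub : ((starK x) ∪ (starK y)).image f ⊆ starK (g x) := by
      intro w hw
      rw [Finset.mem_image] at hw
      obtain ⟨a, ha, rfl⟩ := hw
      rw [Finset.mem_union] at ha
      simp only [starK, Finset.mem_filter] at ha ⊢
      refine ⟨Finset.mem_univ _, ?_⟩
      rcases ha with ⟨_, hxa⟩ | ⟨_, hya⟩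
      · exact hg x a hxa
      · rw [hxy]; exact hg y a hya
    have h7 : (((starK x) ∪ (starK y)).image f).card = 7 := by
      rw [Finset.card_image_of_injective _ hinj, starUnion x y hne]
    have hle := Finset.card_le_card hsub
    rw [h7, cardStar] at hle
    omega
  refine ⟨Equiv.ofBijective g (Finite.injective_iff_bijective.mp ginj), fun a => ?_⟩
  obtain ⟨x, y, hxy, hxy2⟩ := Finset.card_eq_two.mp a.2
  apply Subtype.ext
  have hsub : ({g x, g y} : Finset (Fin 5)) ⊆ (f a).1 := by
    intro e he
    rw [Finset.mem_insert, Finset.mem_singleton] at he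
    rcases he with rfl | rfl
    · exact hg x a (by rw [hxy2]; simp)
    · exact hg y a (by rw [hxy2]; simp)
  have hcard : ({g x, g y} : Finset (Fin 5)).card = 2 := Finset.card_pair (fun h => hxy (ginj h))
  have heq : ({g x, g y} : Finset (Fin 5)) = (f a).1 :=
    Finset.eq_of_subset_of_card_le hsub (by rw [hcard, (f a).2])
  rw [← heq, smul_val, hxy2]
  simp [Equiv.ofBijective_apply]

theorem Stilde_eq_molecule (v : Fin 10 ≃ KVertex) :
    Stilde v = moleculeK v := by
  funext i
  by_cases hC : ∀ a b : KVertex, petersen.Adj a b → petersen.Adj (i (v.symm a)) (i (v.symm b))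
  · obtain ⟨g, hg⟩ := hom_exists _ hC
    have hi : i = fun t => g • v t := by
      funext t
      have := hg (v t)
      simpa using this
    have h1 : Stilde v i = 1 := by
      unfold Stilde
      apply Finset.prod_eq_one
      intro j _
      apply Finset.prod_eq_one
      intro k _
      split_ifs with h
      · have := hC (v j) (v k) h.2
        simp only [Equiv.symm_apply_apply] at this
        unfold adjMat
        rw [if_pos this]
      · rfl
    have h2 : moleculeK v i = 1 := by
      unfold moleculeK
      rw [Finset.sum_apply]
      rw [Finset.sum_eq_single g]
      · rw [if_pos hi]
      · intro b _ hbg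
        rw [if_neg]
        intro hib
        apply hbg
        apply faithful
        intro a
        have h3 : (fun t => b • v t) = fun t => g • v t := hib ▸ hi
        have := congrFun h3 (v.symm a)
        simpa using this
      · intro h; exact absurd (Finset.mem_univ g) h
    rw [h1, h2]
  · push_neg at hC
    obtain ⟨a, b, hab, hno⟩ := hC
    have hjk : v.symm a ≠ v.symm b := by
      intro h
      have : a = b := by
        rw [← v.apply_symm_apply a, ← v.apply_symm_apply b, h]
      rw [this] at hab
      exact petersen.loopless.irrefl b hab
    have h1 : Stilde v i = 0 := by
      unfold Stilde
      rcases lt_or_gt_of_ne hjk with h | h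
      · apply Finset.prod_eq_zero (Finset.mem_univ (v.symm a))
        apply Finset.prod_eq_zero (Finset.mem_univ (v.symm b))
        rw [if_pos ⟨h, by simpa using hab⟩]
        unfold adjMat
        rw [if_neg hno]
      · apply Finset.prod_eq_zero (Finset.mem_univ (v.symm b))
        apply Finset.prod_eq_zero (Finset.mem_univ (v.symm a))
        rw [if_pos ⟨h, by simpa using hab.symm⟩]
        unfold adjMat
        rw [if_neg (fun hh => hno hh.symm)]
    have h2 : moleculeK v i = 0 := by
      unfold moleculeK
      rw [Finset.sum_apply]
      apply Finset.sum_eq_zero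
      intro g _
      rw [if_neg]
      intro hig
      apply hno
      have h3 : ∀ t, i t = g • v t := fun t => congrFun hig t
      rw [h3, h3]
      simp only [Equiv.apply_symm_apply]
      exact adj_smul g hab
    rw [h1, h2]

end
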